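/- For $1 < \alpha < e^{1/e}$, there exists a unique $\omega \in (1, e)$ such that $\alpha^\omega = \omega$, i.e. $\alpha = \omega^{1/\omega}$. -/

import Mathlib

open Real Set

lemma logdiv_hasDerivAt {x : ℝ} (hx : 0 < x) :
    HasDerivAt (fun x : ℝ => Real.log x / x) ((1 - Real.log x) / x ^ 2) x := by
  have h := (Real.hasDerivAt_log hx.ne').div (hasDerivAt_id x) hx.ne'
  refine h.congr_deriv ?_
  simp only [id]
  field_simp

lemma logdiv_strictMonoOn :
    StrictMonoOn (fun x : ℝ => Real.log x / x) (Set.Icc 1 (Real.exp 1)) := by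
  apply strictMonoOn_of_deriv_pos (convex_Icc _ _)
  · intro x hx
    have hx0 : (0:ℝ) < x := lt_of_lt_of_le one_pos hx.1
    exact ((Real.continuousAt_log hx0.ne').div continuousAt_id hx0.ne').continuousWithinAt
  · intro x hx
    rw [interior_Icc] at hx
    have hx0 : (0:ℝ) < x := lt_trans one_pos hx.1
    rw [(logdiv_hasDerivAt hx0).deriv]
    have hlog : Real.log x < 1 := by
      have := Real.log_lt_log hx0 hx.2
      rwa [Real.log_exp] at this
    exact div_pos (by linarith) (by positivity)

theorem fixed_point_exists_unique (α : ℝ) (h1 : 1 < α) (h2 : α < Real.exp (1 / Real.exp 1)) :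
    ∃! ω : ℝ, ω ∈ Set.Ioo 1 (Real.exp 1) ∧ α ^ ω = ω := by
  have hα0 : (0:ℝ) < α := lt_trans one_pos h1
  have he : (1:ℝ) < Real.exp 1 := by
    have := Real.exp_lt_exp.mpr one_pos
    rwa [Real.exp_zero] at this
  have hlogα : Real.log α ∈ Set.Ioo ((fun x : ℝ => Real.log x / x) 1)
      ((fun x : ℝ => Real.log x / x) (Real.exp 1)) := by
    constructor
    · simp [Real.log_pos h1]
    · simp only [Real.log_exp]
      have := Real.log_lt_log hα0 h2
      rwa [Real.log_exp] at this
  have hcont : ContinuousOn (fun x : ℝ => Real.log x / x) (Set.Icc 1 (Real.exp 1)) := by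
    intro x hx
    have hx0 : (0:ℝ) < x := lt_of_lt_of_le one_pos hx.1
    exact ((Real.continuousAt_log hx0.ne').div continuousAt_id hx0.ne').continuousWithinAt
  obtain ⟨ω, hω, hgω⟩ := intermediate_value_Ioo he.le hcont hlogα
  have hω0 : (0:ℝ) < ω := lt_trans one_pos hω.1
  refine ⟨ω, ⟨hω, ?_⟩, ?_⟩
  · rw [Real.rpow_def_of_pos hα0]
    have : ω * Real.log α = Real.log ω := by
      rw [← hgω]; field_simp
    rw [mul_comm, this, Real.exp_log hω0]
  · rintro y ⟨hy, hfy⟩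
    have hy0 : (0:ℝ) < y := lt_trans one_pos hy.1
    have hgy : Real.log y / y = Real.log α := by
      have := congrArg Real.log hfy
      rw [Real.log_rpow hα0] at this
      field_simp [hy0.ne'] at this ⊢
      linarith [this]
    exact logdiv_strictMonoOn.injOn (Set.mem_Icc_of_Ioo hy) (Set.mem_Icc_of_Ioo hω)
      (by simp only [] at hgω ⊢; rw [hgy, hgω])
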